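/- There exists a family (τ_w), indexed by words w over {L,R}, of stopping times on Ω such that: (i) τ_w ≤ ℓ(w)+1 everywhere; (ii) ℙ(S_{τ_w} = d) = P_w(d) for every d ∈ ℤ; and (iii) τ_u(ω) ≤ τ_w(ω) for every ω ∈ Ω whenever u is a prefix of w. -/

import Mathlib

open MeasureTheory

/-- The probability mass functions `P t` on ℤ, defined by
`P 1 = δ₀`, `P (2t) = P t`, `P (2t+1) d = ½ P (t+1) (d+1) + ½ P t (d-1)`. -/
noncomputable def P : ℕ → ℤ → ℝ
  | 0, _ => 0
  | 1, d => if d = 0 then 1 else 0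
  | (n+2), d =>
      if h : (n + 2) % 2 = 0 then P ((n+2)/2) d
      else (1/2) * P ((n+2)/2 + 1) (d+1) + (1/2) * P ((n+2)/2) (d-1)
  decreasing_by all_goals omega

/-- Letters of the alphabet. -/
inductive LR | L | R
deriving DecidableEq

/-- One step of the identification of words with odd integers: `L : t ↦ 2t-1`, `R : t ↦ 2t+1`. -/
def LRstep (t : ℕ) : LR → ℕ
  | LR.L => 2 * t - 1
  | LR.R => 2 * t + 1

/-- The odd integer associated to a word over `{L,R}`, starting from 3. -/
def hword (w : List LR) : ℕ := w.foldl LRstep 3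

/-- `Ω = {-1,+1}^ℕ`, coded as `ℕ → Bool`; the coordinate `ω i` codes `ξ_{i+1} = ±1`. -/
def xi (i : ℕ) (ω : ℕ → Bool) : ℤ := if ω i then 1 else -1

/-- The simple symmetric random walk `S n = ξ₁ + ⋯ + ξ_n`. -/
def S (n : ℕ) (ω : ℕ → Bool) : ℤ := ∑ i ∈ Finset.range n, xi i ω

namespace StopFam


def child (t : ℕ) (b : Bool) : ℕ := t / 2 + if b then 0 else 1

def tau : ℕ → (ℕ → Bool) → ℕ
  | 0, _ => 0
  | 1, _ => 0
  | (n+2), ω =>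
      if (n+2) % 2 = 0 then tau ((n+2)/2) ω
      else tau (child (n+2) (ω 0)) (fun i => ω (i+1)) + 1
  decreasing_by
  · omega
  · simp only [child]; split <;> omega

def core : ℕ → ℕ
  | 0 => 0
  | 1 => 1
  | (n+2) => if (n+2) % 2 = 0 then core ((n+2)/2) else n+2
  decreasing_by omega

lemma tau_even (n : ℕ) (ω : ℕ → Bool) (h : n % 2 = 0) (h2 : 2 ≤ n) :
    tau n ω = tau (n/2) ω := by
  obtain _|_|m := n
  · omega
  · omega
  · rw [tau, if_pos h]

lemma tau_odd (n : ℕ) (ω : ℕ → Bool) (h : n % 2 = 1) (h2 : 2 ≤ n) :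
    tau n ω = tau (child n (ω 0)) (fun i => ω (i+1)) + 1 := by
  obtain _|_|m := n
  · omega
  · omega
  · rw [tau, if_neg (by omega)]

lemma core_odd (n : ℕ) (h : n % 2 = 1) : core n = n := by
  obtain _|_|m := n
  · omega
  · rw [core]
  · rw [core, if_neg (by omega)]

lemma core_even (n : ℕ) (h : n % 2 = 0) (h2 : 2 ≤ n) : core n = core (n/2) := by
  obtain _|_|m := n
  · omega
  · omega
  · rw [core, if_pos h]

def ext (N : ℕ) (f : Fin N → Bool) : ℕ → Bool := fun i => if h : i < N then f ⟨i, h⟩ else false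
lemma child_def (t : ℕ) (b : Bool) : child t b = t / 2 + if b then 0 else 1 := rfl

lemma tau_small (n : ℕ) (ω : ℕ → Bool) (h : n ≤ 1) : tau n ω = 0 := by
  interval_cases n
  · rw [tau]
  · rw [tau]

lemma core_zero : core 0 = 0 := by rw [core]

lemma child_lt (t : ℕ) (b : Bool) (h : 2 ≤ t) (ho : t % 2 = 1) : child t b < t := by
  rw [child_def]; split <;> omega

lemma child_le (t : ℕ) (b : Bool) : child t b ≤ t / 2 + 1 := by
  rw [child_def]; split <;> omega

lemma core_mod (n : ℕ) (h : 1 ≤ n) : core n % 2 = 1 := by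
  induction n using Nat.strong_induction_on with
  | _ n IH =>
    rcases Nat.mod_two_eq_zero_or_one n with he | ho
    · rw [core_even n he (by omega)]
      exact IH (n/2) (by omega) (by omega)
    · rw [core_odd n ho]; exact ho

lemma core_le (n : ℕ) : core n ≤ n := by
  induction n using Nat.strong_induction_on with
  | _ n IH =>
    rcases Nat.mod_two_eq_zero_or_one n with he | ho
    · rcases Nat.lt_or_ge n 2 with h | h
      · have : n = 0 := by omega
        rw [this, core_zero]
      · rw [core_even n he h]
        exact le_trans (IH (n/2) (by omega)) (by omega)
    · rw [core_odd n ho]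

lemma core_spec (n : ℕ) : ∃ k, n = 2^k * core n := by
  induction n using Nat.strong_induction_on with
  | _ n IH =>
    rcases Nat.mod_two_eq_zero_or_one n with he | ho
    · rcases Nat.lt_or_ge n 2 with h | h
      · refine ⟨0, ?_⟩
        have h0 : n = 0 := by omega
        rw [h0, core_zero]; ring
      · rw [core_even n he h]
        obtain ⟨k, hk⟩ := IH (n/2) (by omega)
        refine ⟨k+1, ?_⟩
        have h2 : n = 2 * (n/2) := by omega
        conv_lhs => rw [h2, hk]
        rw [pow_succ]; ring
    · exact ⟨0, by rw [core_odd n ho]; omega⟩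

lemma tau_core (n : ℕ) (ω : ℕ → Bool) : tau n ω = tau (core n) ω := by
  induction n using Nat.strong_induction_on with
  | _ n IH =>
    rcases Nat.mod_two_eq_zero_or_one n with he | ho
    · rcases Nat.lt_or_ge n 2 with h | h
      · have h0 : n = 0 := by omega
        rw [h0, core_zero]
      · rw [tau_even n ω he h, core_even n he h]
        exact IH (n/2) (by omega)
    · rw [core_odd n ho]

lemma tau_le (n : ℕ) : ∀ ω, tau n ω ≤ n := by
  induction n using Nat.strong_induction_on with
  | _ n IH =>
    intro ω
    rcases Nat.lt_or_ge n 2 with h | h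
    · rw [tau_small n ω (by omega)]; omega
    · rcases Nat.mod_two_eq_zero_or_one n with he | ho
      · rw [tau_even n ω he h]
        exact le_trans (IH (n/2) (by omega) ω) (by omega)
      · rw [tau_odd n ω ho h]
        have h2 := IH _ (child_lt n (ω 0) h ho) (fun i => ω (i+1))
        have h3 := child_le n (ω 0)
        omega

lemma tau_pow (n : ℕ) : ∀ (m : ℕ) (ω : ℕ → Bool), n ≤ 2^(m+1) → tau n ω ≤ m := by
  induction n using Nat.strong_induction_on with
  | _ n IH =>
    intro m ω hn
    rcases Nat.lt_or_ge n 2 with h | h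
    · rw [tau_small n ω (by omega)]; omega
    · rcases Nat.mod_two_eq_zero_or_one n with he | ho
      · rw [tau_even n ω he h]
        exact IH (n/2) (by omega) m ω (by omega)
      · rw [tau_odd n ω ho h]
        obtain _ | m' := m
        · norm_num at hn; omega
        · have h3 := child_le n (ω 0)
          have hp : (2:ℕ)^(m'+1+1) = 2 * 2^(m'+1) := by rw [pow_succ]; ring
          have := IH (child n (ω 0)) (child_lt n (ω 0) h ho) m' (fun i => ω (i+1)) (by omega)
          omega

lemma tau_adapted (t : ℕ) : ∀ (n : ℕ) (ω ω' : ℕ → Bool),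
    (∀ i < n, ω i = ω' i) → tau t ω ≤ n → tau t ω' = tau t ω := by
  induction t using Nat.strong_induction_on with
  | _ t IH =>
    intro n ω ω' hag hle
    rcases Nat.lt_or_ge t 2 with h | h
    · rw [tau_small t ω (by omega), tau_small t ω' (by omega)]
    · rcases Nat.mod_two_eq_zero_or_one t with he | ho
      · rw [tau_even t ω he h] at hle ⊢
        rw [tau_even t ω' he h]
        exact IH (t/2) (by omega) n ω ω' hag hle
      · rw [tau_odd t ω ho h] at hle ⊢
        rw [tau_odd t ω' ho h]
        have hn1 : 1 ≤ n := by omega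
        have h0 : ω' 0 = ω 0 := (hag 0 hn1).symm
        rw [h0]
        have : tau (child t (ω 0)) (fun i => ω' (i+1)) = tau (child t (ω 0)) (fun i => ω (i+1)) := by
          apply IH _ (child_lt t (ω 0) h ho) (n-1)
          · intro i hi; exact hag (i+1) (by omega)
          · omega
        omega

def edge (x y : ℕ) : Prop := y = 2*x+1 ∨ y+1 = 2*x ∨ y = 2*x

def R : ℕ → ℕ → Prop := Relation.ReflTransGen edge

lemma R.refl (x : ℕ) : R x x := Relation.ReflTransGen.refl
lemma R.single {x y : ℕ} (h : edge x y) : R x y := Relation.ReflTransGen.single h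
lemma R.trans {x y z : ℕ} (h : R x y) (h' : R y z) : R x z :=
  Relation.ReflTransGen.trans h h'

lemma R_two_pow (k y : ℕ) (hy : 1 ≤ y) : R y (2^k * y) := by
  induction k with
  | zero => simpa using R.refl y
  | succ k IH =>
    refine IH.trans (R.single ?_)
    right; right; rw [pow_succ]; ring

lemma R_L1 (x k : ℕ) : R x (2^k * (2*x+1)) :=
  (R.single (Or.inl rfl)).trans (R_two_pow k (2*x+1) (by omega))

lemma R_L2 (x k : ℕ) (hx : 1 ≤ x) : R x (2^k * (2*x-1) + 1) := by
  induction k with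
  | zero =>
    refine R.single ?_
    right; right; omega
  | succ k IH =>
    refine IH.trans (R.single ?_)
    right; left
    have : (2:ℕ)^(k+1) * (2*x-1) = 2 * (2^k * (2*x-1)) := by rw [pow_succ]; ring
    omega

lemma R_L3 (x k : ℕ) (hx : 1 ≤ x) : R x (2^k * (2*x-1)) := by
  refine (R.single ?_).trans (R_two_pow k (2*x-1) (by omega))
  right; left; omega

lemma R_L4 (x k : ℕ) : R x (2^k * (2*x+1) - 1) := by
  induction k with
  | zero =>
    refine R.single ?_
    right; right; omega
  | succ k IH =>
    refine IH.trans (R.single ?_)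
    left
    have h1 : 0 < (2:ℕ)^k * (2*x+1) := by positivity
    have : (2:ℕ)^(k+1) * (2*x+1) = 2 * (2^k * (2*x+1)) := by rw [pow_succ]; ring
    omega

lemma child_true (t : ℕ) : child t true = t/2 := by rw [child_def]; simp
lemma child_false (t : ℕ) : child t false = t/2 + 1 := by rw [child_def]; simp

lemma inv (b : Bool) (y z : ℕ) (hy : y % 2 = 1) (h3 : 3 ≤ y) (h : R y z) :
    3 ≤ core z ∧ R (child y b) (child (core z) b) := by
  induction h with
  | refl => rw [core_odd y hy]; exact ⟨h3, R.refl _⟩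
  | @tail z z2 hR he IH =>
    obtain ⟨hm3, hRc⟩ := IH
    have hz1 : 1 ≤ z := by have := core_le z; omega
    have hmodd : core z % 2 = 1 := core_mod z hz1
    obtain ⟨k, hk⟩ := core_spec z
    obtain ⟨σ, hmσ⟩ : ∃ σ, core z = 2*σ+1 := ⟨core z / 2, by omega⟩
    have hσ1 : 1 ≤ σ := by omega
    have hz3 : 3 ≤ z := le_trans hm3 (core_le z)
    rcases he with h1 | h2 | h3'
    · -- z2 = 2z+1
      have hodd2 : z2 % 2 = 1 := by omega
      have hcz2 : core z2 = z2 := core_odd z2 hodd2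
      refine ⟨by omega, ?_⟩
      rw [hcz2]
      cases b with
      | true =>
        rw [child_true z2, show z2/2 = z from by omega]
        rw [hmσ, show child (2*σ+1) true = σ from by rw [child_true]; omega] at hRc
        refine hRc.trans ?_
        rw [hk, hmσ]; exact R_L1 σ k
      | false =>
        rw [child_false z2, show z2/2 = z from by omega]
        rw [hmσ, show child (2*σ+1) false = σ + 1 from by rw [child_false]; omega] at hRc
        refine hRc.trans ?_
        rw [hk, hmσ, show 2*σ+1 = 2*(σ+1)-1 from by omega]
        exact R_L2 (σ+1) k (by omega)
    · -- z2 + 1 = 2z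
      have hodd2 : z2 % 2 = 1 := by omega
      have hcz2 : core z2 = z2 := core_odd z2 hodd2
      refine ⟨by omega, ?_⟩
      rw [hcz2]
      cases b with
      | true =>
        rw [child_true z2, show z2/2 = z - 1 from by omega]
        rw [hmσ, show child (2*σ+1) true = σ from by rw [child_true]; omega] at hRc
        refine hRc.trans ?_
        rw [hk, hmσ]; exact R_L4 σ k
      | false =>
        rw [child_false z2, show z2/2 + 1 = z from by omega]
        rw [hmσ, show child (2*σ+1) false = σ + 1 from by rw [child_false]; omega] at hRc
        refine hRc.trans ?_
        rw [hk, hmσ, show 2*σ+1 = 2*(σ+1)-1 from by omega]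
        exact R_L3 (σ+1) k (by omega)
    · -- z2 = 2z
      have : core z2 = core z := by
        rw [h3', core_even (2*z) (by omega) (by omega)]
        congr 1; omega
      rw [this]; exact ⟨hm3, hRc⟩

lemma tau_mono (y : ℕ) : ∀ z ω, R y z → tau y ω ≤ tau z ω := by
  induction y using Nat.strong_induction_on with
  | _ y IH =>
    intro z ω hR
    rcases Nat.lt_or_ge y 2 with h | h
    · rw [tau_small y ω (by omega)]; omega
    · rcases Nat.mod_two_eq_zero_or_one y with he | ho
      · rw [tau_even y ω he h]
        refine IH (y/2) (by omega) z ω ?_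
        exact Relation.ReflTransGen.head (Or.inr (Or.inr (by omega))) hR
      · have h3 : 3 ≤ y := by omega
        obtain ⟨hcz3, hRc⟩ := inv (ω 0) y z ho h3 hR
        have hzo : core z % 2 = 1 := core_mod z (by have := core_le z; omega)
        rw [tau_odd y ω ho h, tau_core z ω, tau_odd (core z) ω hzo (by omega)]
        have := IH (child y (ω 0)) (child_lt y (ω 0) h ho) (child (core z) (ω 0)) (fun i => ω (i+1)) hRc
        omega

lemma measure_of_dep (ℙ : Measure (ℕ → Bool))
    (hcyl : ∀ (s : Finset ℕ) (f : ℕ → Bool),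
      ℙ {ω | ∀ i ∈ s, ω i = f i} = (1/2 : ENNReal) ^ s.card)
    (N : ℕ) (Q : (ℕ → Bool) → Prop)
    [DecidablePred fun f : Fin N → Bool => Q (ext N f)]
    (hdep : ∀ ω ω', (∀ i < N, ω i = ω' i) → Q ω → Q ω') :
    ℙ {ω | Q ω} = (Finset.univ.filter (fun f : Fin N → Bool => Q (ext N f))).card
      * (1/2 : ENNReal)^N := by
  classical
  set Cyl : (Fin N → Bool) → Set (ℕ → Bool) :=
    fun f => {ω | ∀ i ∈ Finset.range N, ω i = ext N f i} with hCyl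
  have hagree : ∀ (f : Fin N → Bool) ω, ω ∈ Cyl f → ∀ i < N, ω i = ext N f i := by
    intro f ω hω i hi
    exact hω i (Finset.mem_range.mpr hi)
  have hset : {ω | Q ω} =
      ⋃ f ∈ Finset.univ.filter (fun f : Fin N → Bool => Q (ext N f)), Cyl f := by
    ext ω
    simp only [Set.mem_setOf_eq, Set.mem_iUnion, Finset.mem_filter, Finset.mem_univ, true_and]
    constructor
    · intro hQ
      refine ⟨fun i => ω i, ?_, ?_⟩
      · refine hdep ω _ ?_ hQ
        intro i hi
        simp [ext, hi]
      · intro i hi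
        simp [ext, Finset.mem_range.mp hi]
    · rintro ⟨f, hf, hω⟩
      refine hdep (ext N f) ω ?_ hf
      intro i hi
      exact (hagree f ω hω i hi).symm
  rw [hset]
  rw [measure_biUnion_finset ?hd ?hm]
  case hd =>
    intro f hf g hg hfg
    refine Set.disjoint_left.mpr ?_
    intro ω hωf hωg
    apply hfg
    funext i
    have h1 := hagree f ω hωf i i.isLt
    have h2 := hagree g ω hωg i i.isLt
    have e1 : ext N f i = f i := by simp [ext, i.isLt]
    have e2 : ext N g i = g i := by simp [ext, i.isLt]
    rw [← e1, ← h1, h2, e2]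
  case hm =>
    intro f _
    have : Cyl f = ⋂ i ∈ Finset.range N, {ω : ℕ → Bool | ω i = ext N f i} := by
      ext ω; simp [hCyl]
    rw [this]
    refine MeasurableSet.biInter (Finset.range N).countable_toSet ?_
    intro i _
    show MeasurableSet ((fun ω : ℕ → Bool => ω i) ⁻¹' {ext N f i})
    exact measurableSet_preimage (measurable_pi_apply i) (measurableSet_singleton _)
  have : ∀ f ∈ Finset.univ.filter (fun f : Fin N → Bool => Q (ext N f)),
      ℙ (Cyl f) = (1/2 : ENNReal)^N := by
    intro f _
    have := hcyl (Finset.range N) (ext N f)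
    rwa [Finset.card_range] at this
  rw [Finset.sum_congr rfl this, Finset.sum_const, nsmul_eq_mul]

lemma P_one (d : ℤ) : P 1 d = if d = 0 then 1 else 0 := by rw [P]

lemma P_even (n : ℕ) (d : ℤ) (h : n % 2 = 0) (h2 : 2 ≤ n) : P n d = P (n/2) d := by
  obtain _|_|m := n
  · omega
  · omega
  · rw [P, dif_pos h]

lemma P_odd (n : ℕ) (d : ℤ) (h : n % 2 = 1) (h2 : 2 ≤ n) :
    P n d = (1/2) * P (n/2 + 1) (d+1) + (1/2) * P (n/2) (d-1) := by
  obtain _|_|m := n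
  · omega
  · omega
  · rw [P, dif_neg (by omega)]

lemma P_nonneg (n : ℕ) : ∀ d, 0 ≤ P n d := by
  induction n using Nat.strong_induction_on with
  | _ n IH =>
    intro d
    rcases Nat.lt_or_ge n 2 with h | h
    · interval_cases n
      · rw [P]
      · rw [P_one]; positivity
    · rcases Nat.mod_two_eq_zero_or_one n with he | ho
      · rw [P_even n d he h]; exact IH (n/2) (by omega) d
      · rw [P_odd n d ho h]
        have h1 := IH (n/2+1) (by omega) (d+1)
        have h2 := IH (n/2) (by omega) (d-1)
        positivity

lemma S_succ' (n : ℕ) (ω : ℕ → Bool) :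
    S (n+1) ω = S n (fun i => ω (i+1)) + xi 0 ω := by
  unfold S
  rw [Finset.sum_range_succ']
  rfl

lemma S_agree (n : ℕ) (ω ω' : ℕ → Bool) (h : ∀ i < n, ω i = ω' i) (k : ℕ) (hk : k ≤ n) :
    S k ω = S k ω' := by
  unfold S
  refine Finset.sum_congr rfl ?_
  intro i hi
  unfold xi
  rw [h i (by simp at hi; omega)]

lemma ext_tail (M : ℕ) (f : Fin (M+1) → Bool) :
    (fun i => ext (M+1) f (i+1)) = ext M (Fin.tail f) := by
  funext i
  simp only [ext, Fin.tail]
  rcases Nat.lt_or_ge i M with h | h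
  · rw [dif_pos (by omega), dif_pos h]
    rfl
  · rw [dif_neg (by omega), dif_neg (by omega)]

lemma ext_zero (M : ℕ) (f : Fin (M+1) → Bool) : ext (M+1) f 0 = f 0 := by
  simp [ext]

lemma key_count (t : ℕ) : ∀ N (d : ℤ), 1 ≤ t → t ≤ N →
    (((Finset.univ.filter
        (fun f : Fin N → Bool => S (tau t (ext N f)) (ext N f) = d)).card : ℝ))
      = P t d * 2^N := by
  induction t using Nat.strong_induction_on with
  | _ t IH =>
    intro N d h1 hN
    rcases Nat.lt_or_ge t 2 with h | h
    · -- t = 1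
      have ht : t = 1 := by omega
      subst ht
      have hpred : ∀ f : Fin N → Bool, (S (tau 1 (ext N f)) (ext N f) = d) ↔ (0 = d) := by
        intro f
        rw [tau_small 1 _ (by omega)]
        unfold S
        simp
      rcases eq_or_ne d 0 with hd | hd
      · subst hd
        rw [Finset.filter_true_of_mem (fun f _ => (hpred f).mpr rfl)]
        rw [P_one]
        simp [Finset.card_univ]
      · rw [Finset.filter_false_of_mem (fun f _ => fun hc => hd (((hpred f).mp hc).symm))]
        rw [P_one, if_neg hd]
        simp
    · rcases Nat.mod_two_eq_zero_or_one t with he | ho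
      · -- even
        have hpred : ∀ f : Fin N → Bool,
            (S (tau t (ext N f)) (ext N f) = d) ↔ (S (tau (t/2) (ext N f)) (ext N f) = d) := by
          intro f; rw [tau_even t _ he h]
        rw [Finset.filter_congr (fun f _ => by rw [hpred f]), P_even t d he h]
        exact IH (t/2) (by omega) N d (by omega) (by omega)
      · -- odd
        obtain ⟨M, rfl⟩ : ∃ M, N = M + 1 := ⟨N - 1, by omega⟩
        have hsplit : ∀ (b : Bool) (g : Fin M → Bool),
            (S (tau t (ext (M+1) (Fin.cons b g))) (ext (M+1) (Fin.cons b g)) = d)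
            ↔ (S (tau (child t b) (ext M g)) (ext M g) = d - xi 0 (ext (M+1) (Fin.cons b g))) := by
          intro b g
          have h0 : ext (M+1) (Fin.cons b g) 0 = b := by rw [ext_zero]; simp
          rw [tau_odd t _ ho h, h0, S_succ', ext_tail, Fin.tail_cons]
          omega
        have hxi : ∀ (b : Bool) (g : Fin M → Bool),
            xi 0 (ext (M+1) (Fin.cons b g)) = if b then 1 else -1 := by
          intro b g
          unfold xi
          rw [ext_zero]
          simp
        -- split the count
        have hcard : ((Finset.univ.filter
            (fun f : Fin (M+1) → Bool => S (tau t (ext (M+1) f)) (ext (M+1) f) = d)).card : ℕ)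
            = (Finset.univ.filter
                (fun g : Fin M → Bool => S (tau (t/2) (ext M g)) (ext M g) = d - 1)).card
            + (Finset.univ.filter
                (fun g : Fin M → Bool => S (tau (t/2+1) (ext M g)) (ext M g) = d + 1)).card := by
          rw [Finset.card_filter, Finset.card_filter, Finset.card_filter]
          rw [← Fintype.sum_equiv (Fin.consEquiv (fun _ : Fin (M+1) => Bool))
            (fun x : Bool × (Fin M → Bool) =>
              if S (tau t (ext (M+1) (Fin.cons x.1 x.2))) (ext (M+1) (Fin.cons x.1 x.2)) = d
              then 1 else 0)
            (fun f : Fin (M+1) → Bool =>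
              if S (tau t (ext (M+1) f)) (ext (M+1) f) = d then 1 else 0)
            (fun x => rfl)]
          rw [Fintype.sum_prod_type, Fintype.sum_bool]
          congr 1
          · refine Finset.sum_congr rfl ?_
            intro g _
            refine if_congr ?_ rfl rfl
            rw [hsplit true g, hxi true g, child_true]
            simp
          · refine Finset.sum_congr rfl ?_
            intro g _
            refine if_congr ?_ rfl rfl
            rw [hsplit false g, hxi false g, child_false]
            simp
        rw [hcard]
        push_cast
        rw [IH (t/2) (by omega) M (d-1) (by omega) (by omega),
            IH (t/2+1) (by omega) M (d+1) (by omega) (by omega),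
            P_odd t d ho h]
        ring


lemma LRstep_pos (s : ℕ) (a : LR) (hs : 1 ≤ s) : 1 ≤ LRstep s a := by
  cases a <;> simp [LRstep] <;> omega

lemma foldl_pos (v : List LR) : ∀ s, 1 ≤ s → 1 ≤ List.foldl LRstep s v := by
  induction v with
  | nil => intro s hs; simpa using hs
  | cons a v IH =>
    intro s hs
    simpa using IH (LRstep s a) (LRstep_pos s a hs)

lemma foldl_le (v : List LR) : ∀ s, List.foldl LRstep s v ≤ (s+1) * 2^(v.length) - 1 := by
  induction v with
  | nil => intro s; simp
  | cons a v IH =>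
    intro s
    have h1 : LRstep s a ≤ 2*s + 1 := by cases a <;> simp [LRstep] <;> omega
    have h2 := IH (LRstep s a)
    have h3 : (LRstep s a + 1) * 2^(v.length) ≤ (2*s+2) * 2^(v.length) :=
      Nat.mul_le_mul_right _ (by omega)
    have h4 : (2*s+2) * 2^(v.length) = (s+1) * 2^(v.length + 1) := by
      rw [pow_succ]; ring
    simp only [List.foldl_cons, List.length_cons]
    omega

lemma R_foldl (v : List LR) : ∀ s, 1 ≤ s → R s (List.foldl LRstep s v) := by
  induction v with
  | nil => intro s hs; exact R.refl s
  | cons a v IH =>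
    intro s hs
    refine Relation.ReflTransGen.head ?_ (IH (LRstep s a) (LRstep_pos s a hs))
    cases a
    · right; left; simp [LRstep]; omega
    · left; simp [LRstep]

lemma hword_pos (w : List LR) : 1 ≤ hword w := foldl_pos w 3 (by omega)

lemma hword_le (w : List LR) : hword w ≤ 2^(w.length + 2) := by
  have h1 := foldl_le w 3
  have h2 : (2:ℕ)^(w.length+2) = 4 * 2^(w.length) := by rw [pow_succ, pow_succ]; ring
  unfold hword
  omega

end StopFam

open StopFam

/-- There is a family `(τ_w)` of stopping times on `Ω = {-1,+1}^ℕ` (carrying the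
fair-coin product probability measure `ℙ`, characterized by its values on cylinder
sets) such that: (i) `τ_w ≤ ℓ(w) + 1` everywhere; (ii) each `τ_w` is a stopping
time for the coordinate filtration, i.e. the event `{τ_w ≤ n}` depends only on the
first `n` coordinates; (iii) the law of the stopped walk `S_{τ_w}` is `P_w`;
(iv) `τ_u ≤ τ_w` pointwise whenever `u` is a prefix of `w`. -/
theorem exists_stopping_family (ℙ : Measure (ℕ → Bool)) [IsProbabilityMeasure ℙ]
    (hcyl : ∀ (s : Finset ℕ) (f : ℕ → Bool),
      ℙ {ω | ∀ i ∈ s, ω i = f i} = (1/2 : ENNReal) ^ s.card) :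
    ∃ τ : List LR → (ℕ → Bool) → ℕ,
      (∀ (w : List LR) (ω : ℕ → Bool), τ w ω ≤ w.length + 1) ∧
      (∀ (w : List LR) (n : ℕ) (ω ω' : ℕ → Bool),
        (∀ i < n, ω i = ω' i) → τ w ω ≤ n → τ w ω' ≤ n) ∧
      (∀ (w : List LR) (d : ℤ),
        ℙ {ω | S (τ w ω) ω = d} = ENNReal.ofReal (P (hword w) d)) ∧
      (∀ u w : List LR, u <+: w → ∀ ω : ℕ → Bool, τ u ω ≤ τ w ω) := by
  refine ⟨fun w ω => tau (hword w) ω, ?_, ?_, ?_, ?_⟩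
  · -- (i) bound
    intro w ω
    exact tau_pow (hword w) (w.length + 1) ω (hword_le w)
  · -- (ii) stopping time
    intro w n ω ω' hag hle
    have hle' : tau (hword w) ω ≤ n := hle
    show tau (hword w) ω' ≤ n
    rw [tau_adapted (hword w) n ω ω' hag hle']
    exact hle'
  · -- (iii) distribution
    intro w d
    show ℙ {ω | S (tau (hword w) ω) ω = d} = ENNReal.ofReal (P (hword w) d)
    set t := hword w with ht
    have ht1 : 1 ≤ t := hword_pos w
    have hdep : ∀ ω ω', (∀ i < t, ω i = ω' i) →
        (S (tau t ω) ω = d) → (S (tau t ω') ω' = d) := by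
      intro ω ω' hag hS
      have hle := tau_le t ω
      have he := tau_adapted t t ω ω' hag hle
      rw [he, ← S_agree t ω ω' hag (tau t ω) hle]
      exact hS
    rw [measure_of_dep ℙ hcyl t (fun ω => S (tau t ω) ω = d) hdep]
    have hkey := key_count t t d ht1 le_rfl
    have h2 : ((2:ℝ))^t ≠ 0 := by positivity
    have hP : P t d = (((Finset.univ.filter
        (fun f : Fin t → Bool => S (tau t (ext t f)) (ext t f) = d)).card : ℝ)) * (1/2)^t := by
      rw [hkey]
      rw [mul_assoc, ← mul_pow]; norm_num
    rw [hP]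
    rw [ENNReal.ofReal_mul (Nat.cast_nonneg _)]
    rw [ENNReal.ofReal_natCast]
    congr 1
    rw [ENNReal.ofReal_pow (by norm_num)]
    congr 1
    rw [ENNReal.ofReal_div_of_pos (by norm_num)]
    norm_num
  · -- (iv) monotone in prefix
    rintro u w ⟨v, rfl⟩ ω
    refine tau_mono (hword u) (hword (u ++ v)) ω ?_
    have : hword (u ++ v) = List.foldl LRstep (hword u) v := by
      unfold hword
      rw [List.foldl_append]
    rw [this]
    exact R_foldl v (hword u) (hword_pos u)
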